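/- Let N, K, K′ be positive integers, ħ a nonzero real number, and let p, q : ℝ → ℂ be continuous at 0, nonvanishing on a neighborhood of 0, with p(0), q(0) not on the closed negative real axis, and satisfying p(ν)^N − ν·Log p(ν) = q(ν)^N − ν·Log q(ν) for all ν in a neighborhood of 0. Fix a real number s, real numbers T_k for those k ∈ {1,…,K} with k not divisible by N, and real numbers X_1,…,X_{K′}. For ν ≠ 0 define e(ν) = exp(ħ⁻¹((Log p(ν) − Log q(ν))·s + Σ′_k (p(ν)^k − q(ν)^k)·T_k + Σ_{k=1}^{K′} (p(ν)^{kN} − q(ν)^{kN})·X_k/ν)), where Σ′_k runs over k ∈ {1,…,K} not divisible by N. Then as ν → 0 (ν ≠ 0), e(ν) converges to E = exp(ħ⁻¹((Log p(0) − Log q(0))·s + Σ′_k (p(0)^k − q(0)^k)·T_k + Σ_{k=1}^{K′} k·(p(0)^{(k−1)N}·Log p(0) − q(0)^{(k−1)N}·Log q(0))·X_k)). -/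

import Mathlib

open Filter

/-- Scaling limit `ν → 0` of the exponential factor of a soliton
solution of the generalized ILW hierarchy (with `t_k = T_k` for `N ∤ k` and
`t_{kN} = X_k/ν`): it converges to the exponential factor of a soliton of the
extended lattice GD hierarchy. -/
theorem stmt_4 (N K K' : ℕ) (hN : 0 < N) (hK : 0 < K) (hK' : 0 < K')
    (hbar : ℝ) (hhbar : hbar ≠ 0)
    (p q : ℝ → ℂ) (hp : ContinuousAt p 0) (hq : ContinuousAt q 0)
    (hp0 : p 0 ∈ Complex.slitPlane) (hq0 : q 0 ∈ Complex.slitPlane)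
    (hred : ∀ᶠ ν in nhds (0 : ℝ), p ν ≠ 0 ∧ q ν ≠ 0 ∧
      p ν ^ N - (ν : ℂ) * Complex.log (p ν)
        = q ν ^ N - (ν : ℂ) * Complex.log (q ν))
    (s : ℝ) (T : Fin K → ℝ) (X : Fin K' → ℝ) :
    Tendsto
      (fun ν : ℝ => Complex.exp ((hbar : ℂ)⁻¹ *
        ((Complex.log (p ν) - Complex.log (q ν)) * (s : ℂ) +
         (∑ k : Fin K, if ¬ (N ∣ (k.val + 1)) then
            (p ν ^ (k.val + 1) - q ν ^ (k.val + 1)) * (T k : ℂ) else 0) +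
         ∑ k : Fin K',
           (p ν ^ ((k.val + 1) * N) - q ν ^ ((k.val + 1) * N)) * (X k : ℂ) / (ν : ℂ))))
      (nhdsWithin (0 : ℝ) {0}ᶜ)
      (nhds (Complex.exp ((hbar : ℂ)⁻¹ *
        ((Complex.log (p 0) - Complex.log (q 0)) * (s : ℂ) +
         (∑ k : Fin K, if ¬ (N ∣ (k.val + 1)) then
            (p 0 ^ (k.val + 1) - q 0 ^ (k.val + 1)) * (T k : ℂ) else 0) +
         ∑ k : Fin K', ((k.val : ℂ) + 1) *
           (p 0 ^ (k.val * N) * Complex.log (p 0)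
             - q 0 ^ (k.val * N) * Complex.log (q 0)) * (X k : ℂ))))) := by
  have h0 := hred.self_of_nhds
  have hab : p 0 ^ N = q 0 ^ N := by
    have := h0.2.2
    simpa using this
  have hLp : Tendsto (fun ν : ℝ => Complex.log (p ν)) (nhds 0)
      (nhds (Complex.log (p 0))) := hp.clog hp0
  have hLq : Tendsto (fun ν : ℝ => Complex.log (q ν)) (nhds 0)
      (nhds (Complex.log (q 0))) := hq.clog hq0
  apply (Complex.continuous_exp.tendsto _).comp
  apply Tendsto.const_mul
  apply Tendsto.add
  apply Tendsto.add
  · exact (((hLp.sub hLq).mul_const _)).mono_left nhdsWithin_le_nhds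
  · apply tendsto_finset_sum
    intro k _
    split
    · exact (((hp.pow _).sub (hq.pow _)).tendsto.mul_const _).mono_left
        nhdsWithin_le_nhds
    · exact tendsto_const_nhds
  · apply tendsto_finset_sum
    intro k _
    have hg : Tendsto (fun ν : ℝ => (Complex.log (p ν) - Complex.log (q ν)) *
        (∑ j ∈ Finset.range (k.val + 1), (p ν ^ N) ^ j * (q ν ^ N) ^ (k.val - j)) *
        (X k : ℂ)) (nhds 0)
        (nhds ((Complex.log (p 0) - Complex.log (q 0)) *
        (∑ j ∈ Finset.range (k.val + 1), (p 0 ^ N) ^ j * (q 0 ^ N) ^ (k.val - j)) *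
        (X k : ℂ))) := by
      apply Tendsto.mul_const
      apply (hLp.sub hLq).mul
      exact tendsto_finset_sum _ fun j _ =>
        ((hp.pow N).pow j).tendsto.mul ((hq.pow N).pow (k.val - j)).tendsto
    have heqset : (fun ν : ℝ => (Complex.log (p ν) - Complex.log (q ν)) *
        (∑ j ∈ Finset.range (k.val + 1), (p ν ^ N) ^ j * (q ν ^ N) ^ (k.val - j)) *
        (X k : ℂ)) =ᶠ[nhdsWithin (0 : ℝ) {0}ᶜ]
        (fun ν : ℝ => (p ν ^ ((k.val + 1) * N) - q ν ^ ((k.val + 1) * N)) *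
          (X k : ℂ) / (ν : ℂ)) := by
      filter_upwards [hred.filter_mono nhdsWithin_le_nhds, self_mem_nhdsWithin]
        with ν hν hν0
      obtain ⟨hpν, hqν, heq⟩ := hν
      have hν0' : (ν : ℂ) ≠ 0 := by exact_mod_cast hν0
      have h1 : p ν ^ N - q ν ^ N =
          (ν : ℂ) * (Complex.log (p ν) - Complex.log (q ν)) := by
        linear_combination heq
      have h2 : p ν ^ ((k.val + 1) * N) - q ν ^ ((k.val + 1) * N) =
          (∑ j ∈ Finset.range (k.val + 1), (p ν ^ N) ^ j * (q ν ^ N) ^ (k.val - j)) *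
          (p ν ^ N - q ν ^ N) := by
        have hgeo := geom_sum₂_mul (p ν ^ N) (q ν ^ N) (k.val + 1)
        simp only [Nat.add_sub_cancel] at hgeo
        rw [hgeo, pow_mul' (p ν) (k.val + 1) N, pow_mul' (q ν) (k.val + 1) N]
      rw [h2, h1]
      field_simp
    have hval : (Complex.log (p 0) - Complex.log (q 0)) *
        (∑ j ∈ Finset.range (k.val + 1), (p 0 ^ N) ^ j * (q 0 ^ N) ^ (k.val - j)) *
        (X k : ℂ) = ((k.val : ℂ) + 1) *
        (p 0 ^ (k.val * N) * Complex.log (p 0)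
          - q 0 ^ (k.val * N) * Complex.log (q 0)) * (X k : ℂ) := by
      have hsum : ∑ j ∈ Finset.range (k.val + 1),
          (p 0 ^ N) ^ j * (q 0 ^ N) ^ (k.val - j)
          = ((k.val : ℂ) + 1) * (p 0 ^ N) ^ k.val := by
        have hterm : ∀ j ∈ Finset.range (k.val + 1),
            (p 0 ^ N) ^ j * (q 0 ^ N) ^ (k.val - j) = (p 0 ^ N) ^ k.val := by
          intro j hj
          rw [← hab, ← pow_add]
          congr 1
          have := Finset.mem_range.mp hj
          omega
        rw [Finset.sum_congr rfl hterm, Finset.sum_const, Finset.card_range,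
          nsmul_eq_mul]
        push_cast
        ring
      have hqk : q 0 ^ (k.val * N) = (p 0 ^ N) ^ k.val := by
        rw [pow_mul' (q 0) k.val N, hab]
      have hpk : p 0 ^ (k.val * N) = (p 0 ^ N) ^ k.val := pow_mul' (p 0) k.val N
      rw [hsum, hqk, hpk]
      ring
    exact hval ▸ ((hg.mono_left nhdsWithin_le_nhds).congr' heqset)
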